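/- Let u be a sequence over {a, b} in which the letter a has frequency α ∈ (0, 1), let 𝐚 = (1213)^ω be the periodic sequence 1, 2, 1, 3, 1, 2, 1, 3, … and 𝐛 = (4)^ω the constant sequence 4, 4, 4, …, and let v = colour(u, 𝐚, 𝐛). Then the frequency vector of v is (α/2, α/4, α/4, 1−α), i.e., letter 1 has frequency α/2, letters 2 and 3 each have frequency α/4, and letter 4 has frequency 1−α in v. -/

import Mathlib

open Finset Filter Topology

/-- Number of occurrences of the letter `c` in the factor of `u` of length `n`
starting at position `i`, i.e. `#{t : i ≤ t < i+n, u t = c}`. -/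
def cnt {A : Type*} [DecidableEq A] (u : ℕ → A) (c : A) (i n : ℕ) : ℕ :=
  ((Finset.Ico i (i + n)).filter (fun t => u t = c)).card

/-- A sequence `u` is `k`-balanced if the numbers of occurrences of any letter in
any two factors of the same length differ by at most `k`. -/
def IsBalanced {A : Type*} [DecidableEq A] (k : ℕ) (u : ℕ → A) : Prop :=
  ∀ i j n : ℕ, ∀ c : A, ((cnt u c i n : ℤ) - (cnt u c j n : ℤ)).natAbs ≤ k

/-- The letter `c` has frequency `f` in the sequence `u`. -/
def HasFreq {A : Type*} [DecidableEq A] (u : ℕ → A) (c : A) (f : ℝ) : Prop :=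
  Tendsto (fun n : ℕ => (cnt u c 0 n : ℝ) / n) atTop (𝓝 f)

/-- Colouring of a binary sequence `u` (letter `a` is `true`, letter `b` is `false`)
by a sequence `va` over `A` and a sequence `vb` over `B` (disjoint alphabets,
realized as the two summands of `A ⊕ B`): the `n`-th occurrence of `a` in `u`
is replaced by `va n`, and the `n`-th occurrence of `b` by `vb n`. -/
def colour {A B : Type*} (u : ℕ → Bool) (va : ℕ → A) (vb : ℕ → B) (N : ℕ) : A ⊕ B :=
  if u N then Sum.inl (va (cnt u true 0 N)) else Sum.inr (vb (cnt u false 0 N))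

lemma cnt_zero' {A : Type*} [DecidableEq A] (u : ℕ → A) (c : A) (n : ℕ) :
    cnt u c 0 n = ((Finset.range n).filter (fun t => u t = c)).card := by
  simp only [cnt, zero_add, ← Finset.range_eq_Ico]

lemma cnt_succ' {A : Type*} [DecidableEq A] (u : ℕ → A) (c : A) (n : ℕ) :
    cnt u c 0 (n + 1) = cnt u c 0 n + if u n = c then 1 else 0 := by
  rw [cnt_zero', cnt_zero', Finset.range_add_one, Finset.filter_insert]
  split_ifs with h
  · rw [Finset.card_insert_of_notMem (by simp)]
  · simp

lemma cntR0 (M : ℕ) : ((Finset.range M).filter (fun m => m % 2 = 0)).card = (M + 1) / 2 := by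
  induction M with
  | zero => simp
  | succ M ih =>
    rw [Finset.range_add_one, Finset.filter_insert]
    split_ifs with h
    · rw [Finset.card_insert_of_notMem (by simp), ih]; omega
    · rw [ih]; omega

lemma cntR1 (M : ℕ) : ((Finset.range M).filter (fun m => m % 4 = 1)).card = (M + 2) / 4 := by
  induction M with
  | zero => simp
  | succ M ih =>
    rw [Finset.range_add_one, Finset.filter_insert]
    split_ifs with h
    · rw [Finset.card_insert_of_notMem (by simp), ih]; omega
    · rw [ih]; omega

lemma cntR2 (M : ℕ) : ((Finset.range M).filter (fun m => m % 4 = 3)).card = M / 4 := by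
  induction M with
  | zero => simp
  | succ M ih =>
    rw [Finset.range_add_one, Finset.filter_insert]
    split_ifs with h
    · rw [Finset.card_insert_of_notMem (by simp), ih]; omega
    · rw [ih]; omega

lemma freq_lemma (f g : ℕ → ℕ) (c C α : ℝ)
    (hb : ∀ n, |(f n : ℝ) - c * g n| ≤ C)
    (hg : Tendsto (fun n => (g n : ℝ) / n) atTop (𝓝 α)) :
    Tendsto (fun n => (f n : ℝ) / n) atTop (𝓝 (c * α)) := by
  have h1 : Tendsto (fun n => c * ((g n : ℝ) / n)) atTop (𝓝 (c * α)) := hg.const_mul c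
  have h2 : Tendsto (fun n : ℕ => ((f n : ℝ) - c * g n) / n) atTop (𝓝 0) := by
    refine squeeze_zero_norm (a := fun n : ℕ => C / n) (fun n => ?_)
      (tendsto_const_div_atTop_nhds_zero_nat C)
    rcases Nat.eq_zero_or_pos n with h | h
    · simp [h]
    · rw [norm_div, Real.norm_natCast]
      exact div_le_div_of_nonneg_right (hb n) (Nat.cast_nonneg n)
  have h3 := h1.add h2
  simp only [add_zero] at h3
  convert h3 using 2 with n
  rw [mul_div_assoc' ,← add_div]
  ring_nf

lemma key_inl {A B : Type*} [DecidableEq A] [DecidableEq B] (u : ℕ → Bool)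
    (va : ℕ → A) (vb : ℕ → B) (c : A) (n : ℕ) :
    cnt (colour u va vb) (Sum.inl c) 0 n
      = ((Finset.range (cnt u true 0 n)).filter (fun m => va m = c)).card := by
  induction n with
  | zero => simp [cnt]
  | succ n ih =>
    rw [cnt_succ', cnt_succ' u true, ih]
    cases h : u n with
    | false => simp [colour, h]
    | true =>
      simp only [colour, h, if_true, if_pos rfl]
      rw [Finset.range_add_one, Finset.filter_insert]
      by_cases hc : va (cnt u true 0 n) = c
      · rw [if_pos hc, Finset.card_insert_of_notMem (by simp),
          if_pos (by rw [hc])]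
      · rw [if_neg hc, if_neg (by simpa using hc), add_zero]

lemma key_inr {B : Type*} [DecidableEq B] {A : Type*} [DecidableEq A] (u : ℕ → Bool)
    (va : ℕ → A) (vb : ℕ → B) (b0 : B) (hvb : ∀ n, vb n = b0) (n : ℕ) :
    cnt (colour u va vb) (Sum.inr b0) 0 n = cnt u false 0 n := by
  induction n with
  | zero => simp [cnt]
  | succ n ih =>
    rw [cnt_succ', cnt_succ' u false, ih]
    cases h : u n with
    | true => simp [colour, h]
    | false => simp [colour, h, hvb]

lemma filt0 (va : ℕ → Fin 3)
    (hva : ∀ n, va n = if n % 2 = 0 then 0 else if n % 4 = 1 then 1 else 2) (M : ℕ) :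
    ((Finset.range M).filter (fun m => va m = 0))
      = (Finset.range M).filter (fun m => m % 2 = 0) := by
  apply Finset.filter_congr
  intro m _
  rw [hva]
  split_ifs with h1 h2 <;> simp_all <;> omega

lemma filt1 (va : ℕ → Fin 3)
    (hva : ∀ n, va n = if n % 2 = 0 then 0 else if n % 4 = 1 then 1 else 2) (M : ℕ) :
    ((Finset.range M).filter (fun m => va m = 1))
      = (Finset.range M).filter (fun m => m % 4 = 1) := by
  apply Finset.filter_congr
  intro m _
  rw [hva]
  split_ifs with h1 h2 <;> simp_all <;> omega

lemma filt2 (va : ℕ → Fin 3)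
    (hva : ∀ n, va n = if n % 2 = 0 then 0 else if n % 4 = 1 then 1 else 2) (M : ℕ) :
    ((Finset.range M).filter (fun m => va m = 2))
      = (Finset.range M).filter (fun m => m % 4 = 3) := by
  apply Finset.filter_congr
  intro m _
  rw [hva]
  split_ifs with h1 h2 <;> simp_all <;> omega

lemma bnd0 (M : ℕ) : |((((M + 1) / 2 : ℕ)) : ℝ) - (1/2) * M| ≤ 1 := by
  have h1 : M ≤ 2 * ((M + 1) / 2) := by omega
  have h2 : 2 * ((M + 1) / 2) ≤ M + 1 := by omega
  have h1' : (M : ℝ) ≤ 2 * ((((M + 1) / 2 : ℕ)) : ℝ) := by exact_mod_cast h1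
  have h2' : 2 * ((((M + 1) / 2 : ℕ)) : ℝ) ≤ (M : ℝ) + 1 := by exact_mod_cast h2
  rw [abs_le]; constructor <;> linarith

lemma bnd1 (M : ℕ) : |((((M + 2) / 4 : ℕ)) : ℝ) - (1/4) * M| ≤ 1 := by
  have h1 : M ≤ 4 * ((M + 2) / 4) + 1 := by omega
  have h2 : 4 * ((M + 2) / 4) ≤ M + 2 := by omega
  have h1' : (M : ℝ) ≤ 4 * ((((M + 2) / 4 : ℕ)) : ℝ) + 1 := by exact_mod_cast h1
  have h2' : 4 * ((((M + 2) / 4 : ℕ)) : ℝ) ≤ (M : ℝ) + 2 := by exact_mod_cast h2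
  rw [abs_le]; constructor <;> linarith

lemma bnd2 (M : ℕ) : |(((M / 4 : ℕ)) : ℝ) - (1/4) * M| ≤ 1 := by
  have h1 : 4 * (M / 4) ≤ M := by omega
  have h2 : M ≤ 4 * (M / 4) + 3 := by omega
  have h1' : 4 * (((M / 4 : ℕ)) : ℝ) ≤ (M : ℝ) := by exact_mod_cast h1
  have h2' : (M : ℝ) ≤ 4 * (((M / 4 : ℕ)) : ℝ) + 3 := by exact_mod_cast h2
  rw [abs_le]; constructor <;> linarith

lemma cnt_add_cnt (u : ℕ → Bool) (n : ℕ) : cnt u true 0 n + cnt u false 0 n = n := by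
  rw [cnt_zero', cnt_zero']
  have := Finset.card_filter_add_card_filter_not
    (s := Finset.range n) (p := fun t => u t = true)
  simpa [Bool.not_eq_true] using this


/-- Colouring a binary sequence with `a`-frequency `α ∈ (0,1)` by the constant gap
sequences `(1213)^ω` (letters `1,2,3` encoded as `0,1,2 : Fin 3`) and `(4)^ω`
(letter `4` encoded as `0 : Fin 1`) yields the frequency vector
`(α/2, α/4, α/4, 1-α)`. -/
theorem colour_freq_vector_quaternary (u : ℕ → Bool) (α : ℝ)
    (hα : α ∈ Set.Ioo (0 : ℝ) 1) (hu : HasFreq u true α)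
    (va : ℕ → Fin 3)
    (hva : ∀ n, va n = if n % 2 = 0 then 0 else if n % 4 = 1 then 1 else 2)
    (vb : ℕ → Fin 1) (hvb : ∀ n, vb n = 0) :
    HasFreq (colour u va vb) (Sum.inl 0) (α / 2) ∧
    HasFreq (colour u va vb) (Sum.inl 1) (α / 4) ∧
    HasFreq (colour u va vb) (Sum.inl 2) (α / 4) ∧
    HasFreq (colour u va vb) (Sum.inr 0) (1 - α) := by
  have hA : Tendsto (fun n : ℕ => (cnt u true 0 n : ℝ) / n) atTop (𝓝 α) := hu
  refine ⟨?_, ?_, ?_, ?_⟩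
  · unfold HasFreq
    have e0 : ∀ n, cnt (colour u va vb) (Sum.inl (0 : Fin 3)) 0 n
        = (cnt u true 0 n + 1) / 2 := fun n => by
      rw [key_inl, filt0 va hva, cntR0]
    have := freq_lemma (fun n => (cnt u true 0 n + 1) / 2) (fun n => cnt u true 0 n)
      (1/2) 1 α (fun n => bnd0 _) hA
    rw [show α / 2 = 1/2 * α by ring]
    simpa only [e0] using this
  · unfold HasFreq
    have e1 : ∀ n, cnt (colour u va vb) (Sum.inl (1 : Fin 3)) 0 n
        = (cnt u true 0 n + 2) / 4 := fun n => by
      rw [key_inl, filt1 va hva, cntR1]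
    have := freq_lemma (fun n => (cnt u true 0 n + 2) / 4) (fun n => cnt u true 0 n)
      (1/4) 1 α (fun n => bnd1 _) hA
    rw [show α / 4 = 1/4 * α by ring]
    simpa only [e1] using this
  · unfold HasFreq
    have e2 : ∀ n, cnt (colour u va vb) (Sum.inl (2 : Fin 3)) 0 n
        = cnt u true 0 n / 4 := fun n => by
      rw [key_inl, filt2 va hva, cntR2]
    have := freq_lemma (fun n => cnt u true 0 n / 4) (fun n => cnt u true 0 n)
      (1/4) 1 α (fun n => bnd2 _) hA
    rw [show α / 4 = 1/4 * α by ring]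
    simpa only [e2] using this
  · unfold HasFreq
    have e3 : ∀ n, cnt (colour u va vb) (Sum.inr (0 : Fin 1)) 0 n = cnt u false 0 n :=
      key_inr u va vb 0 hvb
    have h1 : Tendsto (fun n : ℕ => 1 - (cnt u true 0 n : ℝ) / n) atTop (𝓝 (1 - α)) :=
      tendsto_const_nhds.sub hA
    apply h1.congr'
    filter_upwards [eventually_ge_atTop 1] with n hn
    have hn' : (n : ℝ) ≠ 0 := by positivity
    rw [e3]
    have hsum := cnt_add_cnt u n
    have : (cnt u false 0 n : ℝ) = (n : ℝ) - cnt u true 0 n := by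
      have : ((cnt u true 0 n + cnt u false 0 n : ℕ) : ℝ) = (n : ℝ) := by rw [hsum]
      push_cast at this
      linarith
    rw [this]
    field_simp
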